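/- Let X be a set with a reflexive and transitive convergence a : U X ⇸ X. Equip U X with the convergence a♯(𝔛,𝔵) = 0 if m_X 𝔛 = 𝔵 and ∞ otherwise, and U X × X with the product convergence. Then a, viewed as a map U X × X → [0,∞], is a contraction: for every 𝔴 ∈ U(U X × X), every 𝔵 ∈ U X and every x ∈ X, if m_X (U π₁ 𝔴) = 𝔵 then a (U π₂ 𝔴) x ≥ (a 𝔵 x) ⊖ ξ (U a' 𝔴), where a' : U X × X → ℝ≥0∞ is a viewed as a function. -/

import Mathlib

open scoped ENNReal
open CategoryTheory

noncomputable section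

/-- The extension `Ū r` of a numerical relation `r : X ⇸ Y` to ultrafilters:
`Ū r (𝔵, 𝔶) = ⨆_{A ∈ 𝔵} ⨆_{B ∈ 𝔶} ⨅_{x ∈ A} ⨅_{y ∈ B} r x y`. -/
def uExt {X Y : Type*} (r : X → Y → ℝ≥0∞) (𝔵 : Ultrafilter X) (𝔶 : Ultrafilter Y) : ℝ≥0∞ :=
  ⨆ A ∈ 𝔵, ⨆ B ∈ 𝔶, ⨅ x ∈ A, ⨅ y ∈ B, r x y

/-- The multiplication `m_X : U (U X) → U X` of the ultrafilter monad:
`m_X 𝔛 = {A ⊆ X | {𝔞 ∈ U X | A ∈ 𝔞} ∈ 𝔛}`. -/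
def mU {X : Type*} (𝔛 : Ultrafilter (Ultrafilter X)) : Ultrafilter X :=
  𝔛.bind id

/-- `ξ : U [0,∞] → [0,∞]`, `ξ 𝔳 = ⨆_{A ∈ 𝔳} ⨅_{u ∈ A} u`. -/
def xi (𝔳 : Ultrafilter ℝ≥0∞) : ℝ≥0∞ :=
  ⨆ A ∈ 𝔳, ⨅ u ∈ A, u

/-- `δ : P X × X → [0,∞]` is an approach distance. -/
structure IsApproachDistance {X : Type*} (δ : Set X → X → ℝ≥0∞) : Prop where
  dist_singleton : ∀ x : X, δ {x} x = 0
  dist_empty : ∀ x : X, δ (∅ : Set X) x = ∞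
  dist_union : ∀ (A B : Set X) (x : X), δ (A ∪ B) x = min (δ A x) (δ B x)
  dist_closure : ∀ (A : Set X) (x : X) (ε : ℝ≥0∞), δ A x ≤ δ {y | δ A y ≤ ε} x + ε

/-- The ultrafilter convergence associated to a distance function `δ`:
`a 𝔵 x = ⨆_{A ∈ 𝔵} δ A x`. -/
def appConv {X : Type*} (δ : Set X → X → ℝ≥0∞) (𝔵 : Ultrafilter X) (x : X) : ℝ≥0∞ :=
  ⨆ A ∈ 𝔵, δ A x

/-- `f : X → Y` is a contraction with respect to convergences `a` and `b`:
`a 𝔵 x ≥ b (U f 𝔵) (f x)`. -/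
def IsContraction {X Y : Type*} (a : Ultrafilter X → X → ℝ≥0∞)
    (b : Ultrafilter Y → Y → ℝ≥0∞) (f : X → Y) : Prop :=
  ∀ (𝔵 : Ultrafilter X) (x : X), b (Ultrafilter.map f 𝔵) (f x) ≤ a 𝔵 x

/-- The approach convergence on `[0,∞]`: `λ(𝔳, v) = v ⊖ ξ 𝔳` (truncated subtraction). -/
def ennConv (𝔳 : Ultrafilter ℝ≥0∞) (v : ℝ≥0∞) : ℝ≥0∞ :=
  v - xi 𝔳

/-- The set `[0,∞]^X` of contractions `φ : X → [0,∞]`, for a convergence `a` on `X`. -/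
def Contractions {X : Type*} (a : Ultrafilter X → X → ℝ≥0∞) : Type _ :=
  {φ : X → ℝ≥0∞ // IsContraction a ennConv φ}

/-- The evaluation map `ev : [0,∞]^X × X → [0,∞]`. -/
def evMap {X : Type*} (a : Ultrafilter X → X → ℝ≥0∞) : Contractions a × X → ℝ≥0∞ :=
  fun p => p.1.1 p.2

/-- The exponential convergence `d` on `[0,∞]^X`:
`d(𝔭,φ) = inf {u | ∀ 𝔮 ∈ U([0,∞]^X × X) with U π₁ 𝔮 = 𝔭, ∀ x ∈ X,`
`u ∨ a (U π₂ 𝔮) x + ξ (U ev 𝔮) ≥ φ x}`. -/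
def dExp {X : Type*} (a : Ultrafilter X → X → ℝ≥0∞) :
    Ultrafilter (Contractions a) → Contractions a → ℝ≥0∞ :=
  fun 𝔭 φ => sInf {u : ℝ≥0∞ | ∀ 𝔮 : Ultrafilter (Contractions a × X),
    Ultrafilter.map Prod.fst 𝔮 = 𝔭 → ∀ x : X,
      φ.1 x ≤ max u (a (Ultrafilter.map Prod.snd 𝔮) x) + xi (Ultrafilter.map (evMap a) 𝔮)}

/-- A convergence relation `a : U X ⇸ X` is transitive:
`Ū a 𝔛 𝔵 + a 𝔵 x ≥ a (m_X 𝔛) x`. -/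
def IsTransitiveConv {X : Type*} (a : Ultrafilter X → X → ℝ≥0∞) : Prop :=
  ∀ (𝔛 : Ultrafilter (Ultrafilter X)) (𝔵 : Ultrafilter X) (x : X),
    a (mU 𝔛) x ≤ uExt a 𝔛 𝔵 + a 𝔵 x

/-- A convergence relation `a : U X ⇸ X` is reflexive: `a (e_X x) x = 0`. -/
def IsReflexiveConv {X : Type*} (a : Ultrafilter X → X → ℝ≥0∞) : Prop :=
  ∀ x : X, a (pure x : Ultrafilter X) x = 0

set_option maxHeartbeats 1000000 in
/-- For a reflexive and transitive convergence `a : U X ⇸ X`, the map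
`a : U X × X → [0,∞]` is a contraction, where `U X` carries the convergence
`a♯(𝔛,𝔵) = 0` if `m_X 𝔛 = 𝔵` and `∞` otherwise, `U X × X` the product convergence and
`[0,∞]` its approach convergence: for every `𝔴 ∈ U(U X × X)`, `𝔵 ∈ U X` and `x ∈ X`,
if `m_X (U π₁ 𝔴) = 𝔵` then `a (U π₂ 𝔴) x ≥ (a 𝔵 x) ⊖ ξ (U a' 𝔴)`. -/
theorem conv_isContraction (X : Type*) (a : Ultrafilter X → X → ℝ≥0∞)
    (hrefl : IsReflexiveConv a) (htrans : IsTransitiveConv a)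
    (𝔴 : Ultrafilter (Ultrafilter X × X)) (𝔵 : Ultrafilter X) (x : X)
    (h : mU (Ultrafilter.map Prod.fst 𝔴) = 𝔵) :
    a 𝔵 x - xi (Ultrafilter.map (fun p => a p.1 p.2) 𝔴) ≤ a (Ultrafilter.map Prod.snd 𝔴) x := by
  rw [tsub_le_iff_left]
  have key : uExt a (Ultrafilter.map Prod.fst 𝔴) (Ultrafilter.map Prod.snd 𝔴) ≤
      xi (Ultrafilter.map (fun p => a p.1 p.2) 𝔴) := by
    apply iSup₂_le; intro A hA
    apply iSup₂_le; intro B hB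
    have hA' : Prod.fst ⁻¹' A ∈ 𝔴 := Ultrafilter.mem_map.mp hA
    have hB' : Prod.snd ⁻¹' B ∈ 𝔴 := Ultrafilter.mem_map.mp hB
    set S : Set (Ultrafilter X × X) := Prod.fst ⁻¹' A ∩ Prod.snd ⁻¹' B with hS
    have hSmem : S ∈ 𝔴 := Filter.inter_mem hA' hB'
    have hC : (fun p : Ultrafilter X × X => a p.1 p.2) '' S ∈
        Ultrafilter.map (fun p => a p.1 p.2) 𝔴 := by
      apply Ultrafilter.mem_map.mpr
      exact Filter.mem_of_superset hSmem (fun p hp => Set.mem_image_of_mem _ hp)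
    have step1 : (⨅ 𝔶 ∈ A, ⨅ y ∈ B, a 𝔶 y) ≤
        ⨅ u ∈ (fun p : Ultrafilter X × X => a p.1 p.2) '' S, u := by
      apply le_iInf₂; intro u hu
      obtain ⟨p, hp, rfl⟩ := hu
      exact le_trans (iInf₂_le p.1 hp.1) (iInf₂_le p.2 hp.2)
    exact step1.trans (le_biSup (fun C => ⨅ u ∈ C, (u : ℝ≥0∞)) hC)
  calc a 𝔵 x = a (mU (Ultrafilter.map Prod.fst 𝔴)) x := by rw [h]
    _ ≤ uExt a (Ultrafilter.map Prod.fst 𝔴) (Ultrafilter.map Prod.snd 𝔴)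
        + a (Ultrafilter.map Prod.snd 𝔴) x := htrans _ _ _
    _ ≤ _ := add_le_add key le_rfl

end
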